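/- Let P be a finite bounded poset with |P| > 1 and define the blocker map b : Ant(P) → Ant(P) by b(A) = min I(P,A). If A₁, A₂ are antichains with A₁ ≤ A₂ in Ant(P) (i.e., F(A₁) ⊆ F(A₂)), then b(A₁) ≥ b(A₂) in Ant(P). That is, the blocker map is order-reversing. -/

import Mathlib

open scoped Classical
open Set

/-- The order filter generated by a subset. -/
def upFilter (P : Type*) [Preorder P] (S : Set P) : Set P := {x | ∃ s ∈ S, s ≤ x}

/-- The set of minimal elements of a subset. -/
def minsOf (P : Type*) [Preorder P] (S : Set P) : Set P := {x | Minimal (· ∈ S) x}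

/-- The set of intersecters for `A` in `P`. -/
def inters (P : Type*) [PartialOrder P] [OrderBot P] (A : Set P) : Set P :=
  if A = ∅ then Set.univ
  else if A = {(⊥ : P)} then ∅
  else {b | ∀ a ∈ A, a ≠ ⊥ → ∃ z : P, IsAtom z ∧ z ≤ b ∧ z ≤ a}

/-- The set of complementers for `A` in `P`. -/
def compls (P : Type*) [PartialOrder P] [OrderBot P] (A : Set P) : Set P := (inters P A)ᶜ

/-- The blocker map: the set of minimal intersecters for `A` in `P`. -/
def bmap (P : Type*) [PartialOrder P] [OrderBot P] (A : Set P) : Set P := minsOf P (inters P A)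

lemma antichain_bot {P : Type*} [PartialOrder P] [OrderBot P] {A : Set P}
    (h : IsAntichain (· ≤ ·) A) (hb : (⊥ : P) ∈ A) : A = {⊥} := by
  ext x
  constructor
  · intro hx
    by_contra hne
    exact h hb hx (by simpa using Ne.symm hne) bot_le
  · rintro rfl; exact hb

lemma inters_anti {P : Type*} [PartialOrder P] [BoundedOrder P] {A₁ A₂ : Set P}
    (h1 : IsAntichain (· ≤ ·) A₁) (h2 : IsAntichain (· ≤ ·) A₂)
    (h : upFilter P A₁ ⊆ upFilter P A₂) : inters P A₂ ⊆ inters P A₁ := by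
  by_cases e1 : A₁ = ∅
  · simp [inters, e1]
  by_cases eb1 : A₁ = {(⊥ : P)}
  · -- then ⊥ ∈ upFilter A₂, so ⊥ ∈ A₂, so A₂ = {⊥}, so inters A₂ = ∅
    have hbot : (⊥ : P) ∈ upFilter P A₂ := h ⟨⊥, by simp [eb1], le_rfl⟩
    obtain ⟨s, hs, hsle⟩ := hbot
    have : s = ⊥ := le_bot_iff.mp hsle
    subst this
    have : A₂ = {(⊥ : P)} := antichain_bot h2 hs
    simp [inters, this]
  by_cases e2 : A₂ = ∅
  · exfalso
    obtain ⟨a, ha⟩ := Set.nonempty_iff_ne_empty.mpr e1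
    have := h ⟨a, ha, le_rfl⟩
    simp [upFilter, e2] at this
  by_cases eb2 : A₂ = {(⊥ : P)}
  · simp [inters, e2, eb2]
  · intro b hb
    simp only [inters, e1, eb1, e2, eb2, if_neg, Set.mem_setOf_eq] at hb ⊢
    intro a ha hane
    obtain ⟨a₂, ha₂, ha₂le⟩ := h ⟨a, ha, le_rfl⟩
    have ha₂ne : a₂ ≠ ⊥ := by
      rintro rfl
      exact eb2 (antichain_bot h2 ha₂)
    obtain ⟨z, hz, hzb, hza⟩ := hb a₂ ha₂ ha₂ne
    exact ⟨z, hz, hzb, hza.trans ha₂le⟩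

theorem stmt_11 {P : Type*} [PartialOrder P] [BoundedOrder P] [Fintype P] [Nontrivial P]
    (A₁ A₂ : Set P) (h1 : IsAntichain (· ≤ ·) A₁) (h2 : IsAntichain (· ≤ ·) A₂)
    (h : upFilter P A₁ ⊆ upFilter P A₂) :
    upFilter P (bmap P A₂) ⊆ upFilter P (bmap P A₁) := by
  intro x hx
  obtain ⟨s, hs, hsx⟩ := hx
  have hsI2 : s ∈ inters P A₂ := hs.1
  have hsI1 : s ∈ inters P A₁ := inters_anti h1 h2 h hsI2
  obtain ⟨m, hmle, hmin⟩ := Set.Finite.exists_le_minimal (Set.toFinite (inters P A₁)) hsI1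
  exact ⟨m, hmin, hmle.trans hsx⟩
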